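/- Let L be symmetric p.s.d., Π an orthogonal projector preserving ker(L), S ∈ ℝ^{N×N} preserving both ker(L) and a subspace R, with RSA constant ε = sup_{x∈R,‖x‖_L=1}‖x−Πx‖_L. Then for x ∈ R and any k ≥ 1, ‖S^k x − (ΠSΠ)^k x‖_L ≤ ε ‖x‖_L (C_S + C_Π) Σ_{l=1}^{k} C̄_Π^{k−l} C_S^{l−1}, where C_S = ‖S‖_L, C_Π = ‖ΠS‖_L, C̄_Π = ‖ΠSΠ‖_L. -/

import Mathlib

open Matrix Finset
noncomputable section

/-- The positive semidefinite square root of a positive semidefinite matrix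
(the definition `Matrix.PosSemidef.sqrt` of the older Mathlib, removed since). -/
def Matrix.PosSemidef.sqrt {n : Type*} [Fintype n] [DecidableEq n] {A : Matrix n n ℝ}
    (hA : A.PosSemidef) : Matrix n n ℝ :=
  hA.1.eigenvectorUnitary.1 * diagonal ((↑) ∘ (√·) ∘ hA.1.eigenvalues) *
  (star hA.1.eigenvectorUnitary : Matrix n n ℝ)

lemma Matrix.PosSemidef.posSemidef_sqrt {n : Type*} [Fintype n] [DecidableEq n]
    {A : Matrix n n ℝ} (hA : A.PosSemidef) : hA.sqrt.PosSemidef := by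
  unfold Matrix.PosSemidef.sqrt
  rw [(Unitary.isUnit_coe (U := hA.1.eigenvectorUnitary)).posSemidef_star_right_conjugate_iff]
  rw [posSemidef_diagonal_iff]
  intro i
  simp [Real.sqrt_nonneg]

lemma Matrix.PosSemidef.sqrt_mul_self {n : Type*} [Fintype n] [DecidableEq n]
    {A : Matrix n n ℝ} (hA : A.PosSemidef) : hA.sqrt * hA.sqrt = A := by
  unfold Matrix.PosSemidef.sqrt
  conv_rhs => rw [hA.1.spectral_theorem, Unitary.conjStarAlgAut_apply]
  have hu : (star hA.1.eigenvectorUnitary : Matrix n n ℝ) * hA.1.eigenvectorUnitary.1 = 1 :=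
    Unitary.coe_star_mul_self _
  have hd : diagonal ((↑) ∘ (√·) ∘ hA.1.eigenvalues) * diagonal ((↑) ∘ (√·) ∘ hA.1.eigenvalues)
      = diagonal (RCLike.ofReal ∘ hA.1.eigenvalues : n → ℝ) := by
    rw [diagonal_mul_diagonal]
    congr 1; funext i
    simp [Real.mul_self_sqrt (hA.eigenvalues_nonneg i)]
  calc _ = hA.1.eigenvectorUnitary.1 * (diagonal ((↑) ∘ (√·) ∘ hA.1.eigenvalues) *
      ((star hA.1.eigenvectorUnitary : Matrix n n ℝ) * hA.1.eigenvectorUnitary.1) *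
      diagonal ((↑) ∘ (√·) ∘ hA.1.eigenvalues)) * (star hA.1.eigenvectorUnitary : Matrix n n ℝ) := by
        simp only [Matrix.mul_assoc]
    _ = _ := by rw [hu, Matrix.mul_one, hd]

def IsMoorePenrose {N : ℕ} (L P : Matrix (Fin N) (Fin N) ℝ) : Prop :=
  L * P * L = L ∧ P * L * P = P ∧ (L * P)ᵀ = L * P ∧ (P * L)ᵀ = P * L

def lnorm {M : ℕ} (L : Matrix (Fin M) (Fin M) ℝ) (x : Fin M → ℝ) : ℝ :=
  Real.sqrt (x ⬝ᵥ (L *ᵥ x))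

def opNorm {M : ℕ} (B : Matrix (Fin M) (Fin M) ℝ) : ℝ :=
  ‖(Matrix.toEuclideanCLM (𝕜 := ℝ) (n := Fin M) B)‖

def euclNorm {N : ℕ} (v : Fin N → ℝ) : ℝ := Real.sqrt (v ⬝ᵥ v)

lemma euclNorm_eq_norm {N : ℕ} (v : Fin N → ℝ) :
    euclNorm v = ‖((WithLp.equiv 2 (Fin N → ℝ)).symm v : EuclideanSpace ℝ (Fin N))‖ := by
  rw [EuclideanSpace.norm_eq, euclNorm]
  congr 1
  simp [dotProduct, pow_two]

lemma euclNorm_add_le {N : ℕ} (u v : Fin N → ℝ) : euclNorm (u + v) ≤ euclNorm u + euclNorm v := by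
  rw [euclNorm_eq_norm, euclNorm_eq_norm, euclNorm_eq_norm]
  exact norm_add_le _ _

lemma euclNorm_mulVec_le {N : ℕ} (M : Matrix (Fin N) (Fin N) ℝ) (v : Fin N → ℝ) :
    euclNorm (M *ᵥ v) ≤ opNorm M * euclNorm v := by
  rw [euclNorm_eq_norm, euclNorm_eq_norm]
  have h := (Matrix.toEuclideanCLM (𝕜 := ℝ) (n := Fin N) M).le_opNorm
      ((WithLp.equiv 2 (Fin N → ℝ)).symm v)
  exact h

lemma opNorm_nonneg {N : ℕ} (M : Matrix (Fin N) (Fin N) ℝ) : 0 ≤ opNorm M :=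
  norm_nonneg _

lemma dot_sq {N : ℕ} (C : Matrix (Fin N) (Fin N) ℝ) (y : Fin N → ℝ) :
    (C *ᵥ y) ⬝ᵥ (C *ᵥ y) = y ⬝ᵥ ((Cᵀ * C) *ᵥ y) := by
  rw [← Matrix.mulVec_mulVec, Matrix.dotProduct_mulVec y, ← Matrix.mulVec_transpose,
    Matrix.transpose_transpose]

lemma dot_self_nonneg {N : ℕ} (v : Fin N → ℝ) : 0 ≤ v ⬝ᵥ v := by
  exact Finset.sum_nonneg fun i _ => mul_self_nonneg _

/-- Abstract version of the theorem, with the square roots as abstract matrices. -/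
lemma abstract_stmt {N : ℕ} (L S Pr Lplus A B : Matrix (Fin N) (Fin N) ℝ)
    (hMP1 : L * Lplus * L = L)
    (hA2 : A * A = L) (hB2 : B * B = Lplus)
    (hAt : Aᵀ = A) (hBt : Bᵀ = B) (hLt : Lᵀ = L)
    (hkerPr : ∀ x : Fin N → ℝ, L *ᵥ x = 0 → L *ᵥ (Pr *ᵥ x) = 0)
    (hkerS : ∀ x : Fin N → ℝ, L *ᵥ x = 0 → L *ᵥ (S *ᵥ x) = 0)
    (R : Submodule ℝ (Fin N → ℝ))
    (hSR : ∀ x ∈ R, S *ᵥ x ∈ R)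
    (ε : ℝ) (hε : ∀ x ∈ R, lnorm L (x - Pr *ᵥ x) ≤ ε * lnorm L x)
    (k : ℕ) (hk : 1 ≤ k) :
    ∀ x ∈ R,
      lnorm L ((S ^ k) *ᵥ x - ((Pr * S * Pr) ^ k) *ᵥ x)
        ≤ ε * lnorm L x * (opNorm (A * S * B) + opNorm (A * (Pr * S) * B)) *
            ∑ l ∈ Finset.range k,
              opNorm (A * (Pr * S * Pr) * B) ^ (k - 1 - l) * opNorm (A * S * B) ^ l := by
  set T := Pr * S * Pr with hT
  set cS := opNorm (A * S * B) with hcS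
  set cP := opNorm (A * (Pr * S) * B) with hcP
  set cQ := opNorm (A * T * B) with hcQ
  have hcS0 : 0 ≤ cS := opNorm_nonneg _
  have hcP0 : 0 ≤ cP := opNorm_nonneg _
  have hcQ0 : 0 ≤ cQ := opNorm_nonneg _
  have lnorm_eq : ∀ v : Fin N → ℝ, lnorm L v = euclNorm (A *ᵥ v) := by
    intro v
    rw [lnorm, euclNorm, dot_sq, hAt, hA2]
  have kerA : ∀ v : Fin N → ℝ, L *ᵥ v = 0 → A *ᵥ v = 0 := by
    intro v hv
    have h : (A *ᵥ v) ⬝ᵥ (A *ᵥ v) = 0 := by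
      rw [dot_sq, hAt, hA2, hv, dotProduct_zero]
    exact dotProduct_self_eq_zero.mp h
  have lnorm_ker : ∀ v : Fin N → ℝ, L *ᵥ v = 0 → lnorm L v = 0 := by
    intro v hv; rw [lnorm, hv, dotProduct_zero, Real.sqrt_zero]
  have lnorm_nonneg : ∀ v : Fin N → ℝ, 0 ≤ lnorm L v := fun v => Real.sqrt_nonneg _
  have lnorm_tri : ∀ u v : Fin N → ℝ, lnorm L (u + v) ≤ lnorm L u + lnorm L v := by
    intro u v
    rw [lnorm_eq, lnorm_eq, lnorm_eq, Matrix.mulVec_add]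
    exact euclNorm_add_le _ _
  have key : ∀ M : Matrix (Fin N) (Fin N) ℝ,
      (∀ v : Fin N → ℝ, L *ᵥ v = 0 → L *ᵥ (M *ᵥ v) = 0) →
      ∀ y : Fin N → ℝ, lnorm L (M *ᵥ y) ≤ opNorm (A * M * B) * lnorm L y := by
    intro M hker y
    have hQ : L *ᵥ (y - (Lplus * L) *ᵥ y) = 0 := by
      rw [Matrix.mulVec_sub, Matrix.mulVec_mulVec, ← Matrix.mul_assoc, hMP1, sub_self]
    have h3 : A *ᵥ (M *ᵥ (y - (Lplus * L) *ᵥ y)) = 0 := kerA _ (hker _ hQ)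
    have h4 : A *ᵥ (M *ᵥ y) = A *ᵥ (M *ᵥ ((Lplus * L) *ᵥ y)) := by
      rw [Matrix.mulVec_sub, Matrix.mulVec_sub, sub_eq_zero] at h3
      exact h3
    have h5 : (Lplus * L) *ᵥ y = B *ᵥ ((B * L) *ᵥ y) := by
      rw [Matrix.mulVec_mulVec, ← Matrix.mul_assoc, hB2]
    have h1 : A *ᵥ (M *ᵥ y) = (A * M * B) *ᵥ ((B * L) *ᵥ y) := by
      rw [h4, h5, Matrix.mulVec_mulVec, Matrix.mulVec_mulVec, Matrix.mul_assoc]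
    have h7 : (B * L)ᵀ * (B * L) = L := by
      rw [Matrix.transpose_mul, hBt, hLt]
      calc L * B * (B * L) = L * (B * B) * L := by
            rw [Matrix.mul_assoc L B (B * L), ← Matrix.mul_assoc B B L, ← Matrix.mul_assoc]
        _ = L := by rw [hB2, hMP1]
    have h6 : euclNorm ((B * L) *ᵥ y) = lnorm L y := by
      rw [euclNorm, lnorm, dot_sq, h7]
    calc lnorm L (M *ᵥ y) = euclNorm ((A * M * B) *ᵥ ((B * L) *ᵥ y)) := by
          rw [lnorm_eq, h1]
      _ ≤ opNorm (A * M * B) * euclNorm ((B * L) *ᵥ y) := euclNorm_mulVec_le _ _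
      _ = opNorm (A * M * B) * lnorm L y := by rw [h6]
  have hkerPS : ∀ v : Fin N → ℝ, L *ᵥ v = 0 → L *ᵥ ((Pr * S) *ᵥ v) = 0 := by
    intro v hv
    rw [← Matrix.mulVec_mulVec]
    exact hkerPr _ (hkerS _ hv)
  have hkerT : ∀ v : Fin N → ℝ, L *ᵥ v = 0 → L *ᵥ (T *ᵥ v) = 0 := by
    intro v hv
    rw [hT, ← Matrix.mulVec_mulVec, ← Matrix.mulVec_mulVec]
    exact hkerPr _ (hkerS _ (hkerPr _ hv))
  have hkerPow : ∀ (M : Matrix (Fin N) (Fin N) ℝ),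
      (∀ v : Fin N → ℝ, L *ᵥ v = 0 → L *ᵥ (M *ᵥ v) = 0) →
      ∀ n : ℕ, ∀ v : Fin N → ℝ, L *ᵥ v = 0 → L *ᵥ ((M ^ n) *ᵥ v) = 0 := by
    intro M hker n
    induction n with
    | zero => intro v hv; simpa using hv
    | succ n ih =>
      intro v hv
      rw [pow_succ', ← Matrix.mulVec_mulVec]
      exact hker _ (ih v hv)
  intro x hx
  by_cases hx0 : L *ᵥ x = 0
  · have hLHS : lnorm L ((S ^ k) *ᵥ x - (T ^ k) *ᵥ x) = 0 := by
      apply lnorm_ker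
      rw [Matrix.mulVec_sub, hkerPow S hkerS k x hx0, hkerPow T hkerT k x hx0, sub_self]
    rw [hLHS, lnorm_ker x hx0]
    simp
  · have hlx : 0 < lnorm L x := by
      rcases lt_or_eq_of_le (lnorm_nonneg x) with h | h
      · exact h
      · exfalso
        apply hx0
        have h1 : (A *ᵥ x) ⬝ᵥ (A *ᵥ x) = 0 := by
          have h2 : euclNorm (A *ᵥ x) = 0 := by rw [← lnorm_eq, ← h]
          rw [euclNorm] at h2
          have h3 := Real.sqrt_eq_zero'.mp h2
          exact le_antisymm h3 (dot_self_nonneg _)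
        have h2 : A *ᵥ x = 0 := dotProduct_self_eq_zero.mp h1
        rw [← hA2, ← Matrix.mulVec_mulVec, h2, Matrix.mulVec_zero]
    have hε0 : 0 ≤ ε := by
      have h := le_trans (lnorm_nonneg _) (hε x hx)
      exact (mul_nonneg_iff_of_pos_right hlx).mp h
    have hpow : ∀ n : ℕ, ((S ^ n) *ᵥ x ∈ R) ∧ lnorm L ((S ^ n) *ᵥ x) ≤ cS ^ n * lnorm L x := by
      intro n
      induction n with
      | zero => simpa using hx
      | succ n ih =>
        have hstep : (S ^ (n + 1)) *ᵥ x = S *ᵥ ((S ^ n) *ᵥ x) := by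
          rw [Matrix.mulVec_mulVec, ← pow_succ']
        constructor
        · rw [hstep]; exact hSR _ ih.1
        · rw [hstep]
          calc lnorm L (S *ᵥ ((S ^ n) *ᵥ x)) ≤ cS * lnorm L ((S ^ n) *ᵥ x) := key S hkerS _
            _ ≤ cS * (cS ^ n * lnorm L x) := by
                have h := ih.2
                exact mul_le_mul_of_nonneg_left h hcS0
            _ = cS ^ (n + 1) * lnorm L x := by ring
    have dbound : ∀ w ∈ R, lnorm L (S *ᵥ w - T *ᵥ w) ≤ ε * (cS + cP) * lnorm L w := by
      intro w hw
      have hdecomp : S *ᵥ w - T *ᵥ w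
          = (S *ᵥ w - Pr *ᵥ (S *ᵥ w)) + (Pr * S) *ᵥ (w - Pr *ᵥ w) := by
        rw [hT, Matrix.mulVec_sub, Matrix.mulVec_mulVec, Matrix.mulVec_mulVec]
        abel
      rw [hdecomp]
      have t1 : lnorm L (S *ᵥ w - Pr *ᵥ (S *ᵥ w)) ≤ ε * (cS * lnorm L w) := by
        calc lnorm L (S *ᵥ w - Pr *ᵥ (S *ᵥ w)) ≤ ε * lnorm L (S *ᵥ w) :=
              hε _ (hSR w hw)
          _ ≤ ε * (cS * lnorm L w) :=
              mul_le_mul_of_nonneg_left (key S hkerS w) hε0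
      have t2 : lnorm L ((Pr * S) *ᵥ (w - Pr *ᵥ w)) ≤ cP * (ε * lnorm L w) := by
        calc lnorm L ((Pr * S) *ᵥ (w - Pr *ᵥ w)) ≤ cP * lnorm L (w - Pr *ᵥ w) :=
              key (Pr * S) hkerPS _
          _ ≤ cP * (ε * lnorm L w) :=
              mul_le_mul_of_nonneg_left (hε w hw) hcP0
      calc lnorm L ((S *ᵥ w - Pr *ᵥ (S *ᵥ w)) + (Pr * S) *ᵥ (w - Pr *ᵥ w))
          ≤ lnorm L (S *ᵥ w - Pr *ᵥ (S *ᵥ w)) + lnorm L ((Pr * S) *ᵥ (w - Pr *ᵥ w)) :=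
            lnorm_tri _ _
        _ ≤ ε * (cS * lnorm L w) + cP * (ε * lnorm L w) := add_le_add t1 t2
        _ = ε * (cS + cP) * lnorm L w := by ring
    have main : ∀ n : ℕ,
        lnorm L ((S ^ (n + 1)) *ᵥ x - (T ^ (n + 1)) *ᵥ x)
          ≤ ε * lnorm L x * (cS + cP) * ∑ l ∈ Finset.range (n + 1), cQ ^ (n - l) * cS ^ l := by
      intro n
      induction n with
      | zero =>
        simp only [zero_add, pow_one, Finset.sum_range_one, Nat.zero_sub, pow_zero, mul_one]
        calc lnorm L (S *ᵥ x - T *ᵥ x) ≤ ε * (cS + cP) * lnorm L x := dbound x hx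
          _ = ε * lnorm L x * (cS + cP) := by ring
      | succ n ih =>
        have hsplit : (S ^ (n + 2)) *ᵥ x - (T ^ (n + 2)) *ᵥ x
            = T *ᵥ ((S ^ (n + 1)) *ᵥ x - (T ^ (n + 1)) *ᵥ x) +
              (S *ᵥ ((S ^ (n + 1)) *ᵥ x) - T *ᵥ ((S ^ (n + 1)) *ᵥ x)) := by
          rw [Matrix.mulVec_sub, Matrix.mulVec_mulVec, Matrix.mulVec_mulVec,
            Matrix.mulVec_mulVec, ← pow_succ', ← pow_succ']
          abel
        have hsum : ∑ l ∈ Finset.range (n + 2), cQ ^ (n + 1 - l) * cS ^ l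
            = cQ * ∑ l ∈ Finset.range (n + 1), cQ ^ (n - l) * cS ^ l + cS ^ (n + 1) := by
          rw [Finset.sum_range_succ, Nat.sub_self, pow_zero, one_mul, Finset.mul_sum]
          congr 1
          apply Finset.sum_congr rfl
          intro l hl
          have hln : l ≤ n := Nat.lt_succ_iff.mp (Finset.mem_range.mp hl)
          have he : n + 1 - l = (n - l) + 1 := by omega
          rw [he, pow_succ']
          ring
        calc lnorm L ((S ^ (n + 2)) *ᵥ x - (T ^ (n + 2)) *ᵥ x)
            ≤ lnorm L (T *ᵥ ((S ^ (n + 1)) *ᵥ x - (T ^ (n + 1)) *ᵥ x)) +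
              lnorm L (S *ᵥ ((S ^ (n + 1)) *ᵥ x) - T *ᵥ ((S ^ (n + 1)) *ᵥ x)) := by
              rw [hsplit]; exact lnorm_tri _ _
          _ ≤ cQ * (ε * lnorm L x * (cS + cP) * ∑ l ∈ Finset.range (n + 1), cQ ^ (n - l) * cS ^ l)
              + ε * (cS + cP) * (cS ^ (n + 1) * lnorm L x) := by
              apply add_le_add
              · exact le_trans (key T hkerT _) (mul_le_mul_of_nonneg_left ih hcQ0)
              · exact le_trans (dbound _ (hpow (n + 1)).1)
                  (mul_le_mul_of_nonneg_left (hpow (n + 1)).2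
                    (mul_nonneg hε0 (add_nonneg hcS0 hcP0)))
          _ = ε * lnorm L x * (cS + cP) *
              (cQ * ∑ l ∈ Finset.range (n + 1), cQ ^ (n - l) * cS ^ l + cS ^ (n + 1)) := by ring
          _ = ε * lnorm L x * (cS + cP) *
              ∑ l ∈ Finset.range (n + 2), cQ ^ (n + 1 - l) * cS ^ l := by rw [hsum]
    obtain ⟨n, rfl⟩ : ∃ n, k = n + 1 := ⟨k - 1, by omega⟩
    have h := main n
    simpa using h

theorem stmt_10 {N : ℕ} (L S Pr : Matrix (Fin N) (Fin N) ℝ)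
    (hL : L.PosSemidef)
    (Lplus : Matrix (Fin N) (Fin N) ℝ) (hLplusMP : IsMoorePenrose L Lplus)
    (hLplus : Lplus.PosSemidef)
    -- `Pr` is an orthogonal projector (`Π`)
    (hproj : Pr * Pr = Pr) (hsym : Prᵀ = Pr)
    (hkerPr : ∀ x : Fin N → ℝ, L *ᵥ x = 0 → L *ᵥ (Pr *ᵥ x) = 0)
    (hkerS : ∀ x : Fin N → ℝ, L *ᵥ x = 0 → L *ᵥ (S *ᵥ x) = 0)
    (R : Submodule ℝ (Fin N → ℝ))
    (hSR : ∀ x ∈ R, S *ᵥ x ∈ R)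
    (ε : ℝ) (hε : ∀ x ∈ R, lnorm L (x - Pr *ᵥ x) ≤ ε * lnorm L x)
    (k : ℕ) (hk : 1 ≤ k) :
    ∀ x ∈ R,
      lnorm L ((S ^ k) *ᵥ x - ((Pr * S * Pr) ^ k) *ᵥ x)
        ≤ ε * lnorm L x *
            (opNorm (hL.sqrt * S * hLplus.sqrt) +
              opNorm (hL.sqrt * (Pr * S) * hLplus.sqrt)) *
            ∑ l ∈ Finset.range k,
              opNorm (hL.sqrt * (Pr * S * Pr) * hLplus.sqrt) ^ (k - 1 - l) *
                opNorm (hL.sqrt * S * hLplus.sqrt) ^ l := by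
  have hAt : hL.sqrtᵀ = hL.sqrt := by
    rw [← Matrix.conjTranspose_eq_transpose_of_trivial]
    exact hL.posSemidef_sqrt.isHermitian
  have hBt : hLplus.sqrtᵀ = hLplus.sqrt := by
    rw [← Matrix.conjTranspose_eq_transpose_of_trivial]
    exact hLplus.posSemidef_sqrt.isHermitian
  have hLt : Lᵀ = L := by
    rw [← Matrix.conjTranspose_eq_transpose_of_trivial]
    exact hL.isHermitian
  exact abstract_stmt L S Pr Lplus hL.sqrt hLplus.sqrt hLplusMP.1
    hL.sqrt_mul_self hLplus.sqrt_mul_self hAt hBt hLt hkerPr hkerS R hSR ε hε k hk
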